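/- Let E, F be real vector spaces, P ⊆ E and Q ⊆ F convex sets containing the origin, and let P ⊕ Q := convexHull((P × {0}) ∪ ({0} × Q)). Then for every real λ > 0 and every (x, y) ∈ E × F: (x, y) ∈ λ • (P ⊕ Q) if and only if there exist real numbers λ₁, λ₂ ≥ 0 with λ₁ + λ₂ = λ, x ∈ λ₁ • P, and y ∈ λ₂ • Q (where 0 • P is interpreted as {0}). -/

import Mathlib

open Pointwise
theorem stmt_10 {E F : Type*} [AddCommGroup E] [Module ℝ E]
    [AddCommGroup F] [Module ℝ F]
    (P : Set E) (Q : Set F) (hP : Convex ℝ P) (hQ : Convex ℝ Q)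
    (h0P : (0 : E) ∈ P) (h0Q : (0 : F) ∈ Q)
    (l : ℝ) (hl : 0 < l) (x : E) (y : F) :
    (x, y) ∈ l • convexHull ℝ ((P ×ˢ ({0} : Set F)) ∪ (({0} : Set E) ×ˢ Q)) ↔
      ∃ l₁ l₂ : ℝ, 0 ≤ l₁ ∧ 0 ≤ l₂ ∧ l₁ + l₂ = l ∧ x ∈ l₁ • P ∧ y ∈ l₂ • Q := by
  rw [(hP.prod (convex_singleton (0 : F))).convexHull_union
      ((convex_singleton (0 : E)).prod hQ)
      ⟨(0, 0), h0P, rfl⟩ ⟨(0, 0), rfl, h0Q⟩,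
    Set.mem_smul_set_iff_inv_smul_mem₀ hl.ne']
  constructor
  · rintro h
    rw [mem_convexJoin] at h
    obtain ⟨⟨p, f⟩, ⟨hp, hf⟩, ⟨e, q⟩, ⟨he, hq⟩, a, b, ha, hb, hab, hseg⟩ := h
    simp only [Set.mem_singleton_iff] at hf he
    subst hf he
    refine ⟨l * a, l * b, by positivity, by positivity, by rw [← mul_add, hab, mul_one],
      ?_, ?_⟩
    · refine ⟨p, hp, ?_⟩
      have := congrArg Prod.fst hseg
      have h2 := congrArg (fun v => l • v) this
      simpa [Prod.smul_def, smul_smul, mul_inv_cancel₀ hl.ne'] using h2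
    · refine ⟨q, hq, ?_⟩
      have := congrArg Prod.snd hseg
      have h2 := congrArg (fun v => l • v) this
      simpa [Prod.smul_def, smul_smul, mul_inv_cancel₀ hl.ne'] using h2
  · rintro ⟨l₁, l₂, h1, h2, hsum, ⟨p, hp, hx⟩, ⟨q, hq, hy⟩⟩
    rw [mem_convexJoin]
    refine ⟨(p, 0), ⟨hp, rfl⟩, (0, q), ⟨rfl, hq⟩, l₁ / l, l₂ / l,
      div_nonneg h1 hl.le, div_nonneg h2 hl.le, by rw [← add_div, hsum, div_self hl.ne'], ?_⟩
    subst hx hy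
    ext <;> simp [Prod.smul_def, smul_smul] <;> field_simp
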